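/- Let c be a polynomial comonad (a small category) with carrier c = Σ_{a} y^{c[a]}. Then left c-comodule structures on a constant polynomial M (maps λ : M → c ◁ M satisfying the comodule laws) correspond exactly to copresheaves X : c → Set together with an identification of M with the set of elements of X; i.e. the category of (c, 0)-bicomodules is equivalent to the copresheaf category c-Set. Moreover the carrier of any (c,0)-bicomodule is necessarily a constant polynomial. -/

import Mathlib

universe u

open CategoryTheory

/-- A comonoid structure on a polynomial functor `c` for `(y, ◁)`, presented as a
comonad structure on the underlying endofunctor. -/
structure PolyComonoid (c : PFunctor.{u, u}) where
  ε : ∀ X : Type u, c.Obj X → X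
  δ : ∀ X : Type u, c.Obj X → c.Obj (c.Obj X)
  ε_natural : ∀ {X Y : Type u} (f : X → Y) (x : c.Obj X), f (ε X x) = ε Y (c.map f x)
  δ_natural : ∀ {X Y : Type u} (f : X → Y) (x : c.Obj X),
    c.map (c.map f) (δ X x) = δ Y (c.map f x)
  counit_outer : ∀ (X : Type u) (x : c.Obj X), ε (c.Obj X) (δ X x) = x
  counit_inner : ∀ (X : Type u) (x : c.Obj X), c.map (ε X) (δ X x) = x
  coassoc : ∀ (X : Type u) (x : c.Obj X), c.map (δ X) (δ X x) = δ (c.Obj X) (δ X x)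

/-- A small category structure on the polynomial `c` (objects `c.A`, outfacing
morphisms `c.B a`). -/
structure PolyCatStruct (c : PFunctor.{u, u}) where
  cod : ∀ a : c.A, c.B a → c.A
  ident : ∀ a : c.A, c.B a
  comp : ∀ (a : c.A) (f : c.B a), c.B (cod a f) → c.B a
  cod_ident : ∀ a : c.A, cod a (ident a) = a
  cod_comp : ∀ (a : c.A) (f : c.B a) (g : c.B (cod a f)),
    cod a (comp a f g) = cod (cod a f) g
  ident_comp : ∀ (a : c.A) (f : c.B a),
    comp a (ident a) ((cod_ident a).symm ▸ f) = f
  comp_ident : ∀ (a : c.A) (f : c.B a), comp a f (ident (cod a f)) = f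
  assoc : ∀ (a : c.A) (f : c.B a) (g : c.B (cod a f)) (h : c.B (cod (cod a f) g)),
    comp a (comp a f g) ((cod_comp a f g).symm ▸ h) = comp a f (comp (cod a f) g h)

/-- A left `c`-comodule with constant carrier `M`, i.e. a `(c,0)`-bicomodule:
a coaction `M → c ◁ M` satisfying the comodule laws. -/
structure PolyComod {c : PFunctor.{u, u}} (Mc : PolyComonoid c) where
  M : Type u
  co : M → c.Obj M
  counit : ∀ m : M, Mc.ε M (co m) = m
  coassoc : ∀ m : M, c.map co (co m) = Mc.δ M (co m)

/-- A morphism of comodules. -/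
structure PolyComodHom {c : PFunctor.{u, u}} {Mc : PolyComonoid c}
    (P Q : PolyComod Mc) where
  h : P.M → Q.M
  compat : ∀ m : P.M, c.map h (P.co m) = Q.co (h m)

instance {c : PFunctor.{u, u}} (Mc : PolyComonoid c) : Category (PolyComod Mc) where
  Hom := PolyComodHom
  id P := ⟨fun m => m, fun m => by
    have : (fun m => m : P.M → P.M) = id := rfl
    rw [this, c.id_map]⟩
  comp f g := ⟨fun m => g.h (f.h m), fun m => by
    have : (fun m => g.h (f.h m)) = g.h ∘ f.h := rfl
    rw [this, ← PFunctor.map_map, f.compat, g.compat]⟩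
  id_comp := by intros; rfl
  comp_id := by intros; rfl
  assoc := by intros; rfl

/-- A copresheaf on the category presented by `C`. -/
structure PolyCopresheaf {c : PFunctor.{u, u}} (C : PolyCatStruct c) where
  X : c.A → Type u
  act : ∀ (a : c.A) (f : c.B a), X a → X (C.cod a f)
  act_ident : ∀ (a : c.A) (x : X a), (C.cod_ident a) ▸ act a (C.ident a) x = x
  act_comp : ∀ (a : c.A) (f : c.B a) (g : c.B (C.cod a f)) (x : X a),
    act (C.cod a f) g (act a f x) = (C.cod_comp a f g) ▸ act a (C.comp a f g) x

/-- A morphism of copresheaves. -/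
structure PolyCopresheafHom {c : PFunctor.{u, u}} {C : PolyCatStruct c}
    (P Q : PolyCopresheaf C) where
  h : ∀ a : c.A, P.X a → Q.X a
  compat : ∀ (a : c.A) (f : c.B a) (x : P.X a),
    h (C.cod a f) (P.act a f x) = Q.act a f (h a x)

instance {c : PFunctor.{u, u}} (C : PolyCatStruct c) : Category (PolyCopresheaf C) where
  Hom := PolyCopresheafHom
  id P := ⟨fun _ x => x, fun _ _ _ => rfl⟩
  comp f g := ⟨fun a x => g.h a (f.h a x), fun a fm x => by
    rw [f.compat, g.compat]⟩
  id_comp := by intros; rfl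
  comp_id := by intros; rfl
  assoc := by intros; rfl

/-! ### Auxiliary machinery -/

section Aux
variable {c : PFunctor.{u, u}}

/-- Transporting the argument of the second component of a sigma. -/
lemma snd_cast {T : Type u} {a : c.A} (p : c.Obj T) (k : c.B a → T)
    (h : p = ⟨a, k⟩) (h' : a = p.1) (f : c.B a) : p.2 (h' ▸ f) = k f := by
  subst h; rfl

lemma map_cast {T T' : Type u} (G : T → T') (p : c.Obj T) (b : c.A) (h : p.1 = b) :
    c.map G p = ⟨b, fun f => G (p.2 (h.symm ▸ f))⟩ := by
  obtain ⟨a, u⟩ := p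
  dsimp at h; subst h; rfl

lemma mk_eq_of {X : Type u} {a A B : c.A} (k : c.B a → X)
    (e1 : c.B A → c.B a) (e2 : c.B B → c.B a) (h : B = A)
    (he : ∀ f : c.B A, e2 (h.symm ▸ f) = e1 f) :
    (⟨A, fun g => k (e1 g)⟩ : c.Obj X) = ⟨B, fun g => k (e2 g)⟩ := by
  subst h
  have : e2 = e1 := funext he
  rw [this]

lemma heq_cast {α : Sort*} {F : α → Sort*} {a b : α} (h : a = b) (x : F a) (y : F b)
    (hxy : h ▸ x = y) : HEq x y := by subst h; subst hxy; rfl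

lemma subtype_heq {β : Type u} {pr : β → c.A} {a b : c.A} (h : a = b)
    (x : {m : β // pr m = a}) (y : {m : β // pr m = b}) (hv : x.1 = y.1) : HEq x y := by
  subst h; exact heq_of_eq (Subtype.ext hv)

lemma sig_snd_eq {a : c.A} {T : Type u} {u1 v1 : c.B a → T}
    (h : (⟨a, u1⟩ : c.Obj T) = ⟨a, v1⟩) : u1 = v1 := by
  injection h with h1 h2

namespace PolyComonoid
variable (Mc : PolyComonoid c)

def ident (a : c.A) : c.B a := Mc.ε (c.B a) ⟨a, id⟩

lemma eps_eq (X : Type u) (x : c.Obj X) : Mc.ε X x = x.2 (Mc.ident x.1) :=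
  (Mc.ε_natural x.2 ⟨x.1, id⟩).symm

def δ₀ (a : c.A) : c.Obj (c.Obj (c.B a)) := Mc.δ (c.B a) ⟨a, id⟩

lemma delta_eq (X : Type u) (x : c.Obj X) :
    Mc.δ X x = c.map (c.map x.2) (Mc.δ₀ x.1) :=
  (Mc.δ_natural x.2 ⟨x.1, id⟩).symm

lemma fst_δ₀ (a : c.A) : (Mc.δ₀ a).1 = a :=
  congrArg Sigma.fst (Mc.counit_inner (c.B a) ⟨a, id⟩)

def D (a : c.A) (f : c.B a) : c.Obj (c.B a) :=
  (Mc.δ₀ a).2 ((Mc.fst_δ₀ a).symm ▸ f)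

lemma delta_eq' (X : Type u) (x : c.Obj X) :
    Mc.δ X x = ⟨x.1, fun f => c.map x.2 (Mc.D x.1 f)⟩ := by
  rw [Mc.delta_eq]
  exact map_cast (c.map x.2) (Mc.δ₀ x.1) x.1 (Mc.fst_δ₀ x.1)

lemma δ₀_eq (a : c.A) : Mc.δ₀ a = ⟨a, Mc.D a⟩ :=
  Mc.delta_eq' (c.B a) ⟨a, id⟩

end PolyComonoid
end Aux

section ToCat
variable {c : PFunctor.{u, u}} (Mc : PolyComonoid c)
namespace PolyComonoid

lemma D_ident (a : c.A) : Mc.D a (Mc.ident a) = ⟨a, id⟩ := by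
  have h := Mc.counit_outer (c.B a) ⟨a, id⟩
  rw [show Mc.δ (c.B a) ⟨a, id⟩ = Mc.δ₀ a from rfl, Mc.δ₀_eq] at h
  exact (Mc.eps_eq _ _).symm.trans h

lemma cod_ident' (a : c.A) : (Mc.D a (Mc.ident a)).1 = a :=
  congrArg Sigma.fst (Mc.D_ident a)

lemma comp_ident' (a : c.A) (f : c.B a) :
    (Mc.D a f).2 (Mc.ident (Mc.D a f).1) = f := by
  have h := Mc.counit_inner (c.B a) ⟨a, id⟩
  rw [show Mc.δ (c.B a) ⟨a, id⟩ = Mc.δ₀ a from rfl, Mc.δ₀_eq] at h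
  -- h : c.map (Mc.ε (c.B a)) ⟨a, Mc.D a⟩ = ⟨a, id⟩
  have h2 : (fun f => Mc.ε (c.B a) (Mc.D a f)) = (id : c.B a → c.B a) := sig_snd_eq h
  have := congrFun h2 f
  rwa [Mc.eps_eq] at this

lemma key_comp (a : c.A) (f : c.B a) (g : c.B (Mc.D a f).1) :
    (⟨(Mc.D (Mc.D a f).1 g).1, fun x => (Mc.D a f).2 ((Mc.D (Mc.D a f).1 g).2 x)⟩ :
      c.Obj (c.B a)) = Mc.D a ((Mc.D a f).2 g) := by
  have h := Mc.coassoc (c.B a) ⟨a, id⟩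
  rw [show Mc.δ (c.B a) ⟨a, id⟩ = Mc.δ₀ a from rfl, Mc.δ₀_eq] at h
  -- LHS : c.map (Mc.δ (c.B a)) ⟨a, Mc.D a⟩ = ⟨a, fun f => Mc.δ (c.B a) (Mc.D a f)⟩
  -- RHS : Mc.δ (c.Obj (c.B a)) ⟨a, Mc.D a⟩
  rw [Mc.delta_eq' (c.Obj (c.B a)) ⟨a, Mc.D a⟩] at h
  have h2 := congrFun (sig_snd_eq h) f
  dsimp only [Function.comp] at h2
  -- h2 : Mc.δ (c.B a) (Mc.D a f) = c.map (Mc.D a) (Mc.D a f)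
  rw [Mc.delta_eq' (c.B a) (Mc.D a f)] at h2
  have h3 := congrFun (sig_snd_eq h2) g
  exact h3

def toCat : PolyCatStruct c where
  cod a f := (Mc.D a f).1
  ident := Mc.ident
  comp a f g := (Mc.D a f).2 g
  cod_ident := Mc.cod_ident'
  cod_comp a f g := (congrArg Sigma.fst (Mc.key_comp a f g)).symm
  ident_comp a f := snd_cast _ _ (Mc.D_ident a) _ f
  comp_ident a f := Mc.comp_ident' a f
  assoc a f g h := snd_cast _ _ (Mc.key_comp a f g).symm _ h

end PolyComonoid
end ToCat

section FromCat
variable {c : PFunctor.{u, u}}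

def PolyCatStruct.toComonoid (C : PolyCatStruct c) : PolyComonoid c where
  ε X x := x.2 (C.ident x.1)
  δ X x := ⟨x.1, fun f => ⟨C.cod x.1 f, fun g => x.2 (C.comp x.1 f g)⟩⟩
  ε_natural f x := rfl
  δ_natural f x := rfl
  counit_outer X x := by
    exact (mk_eq_of x.2 id (C.comp x.1 (C.ident x.1)) (C.cod_ident x.1)
      (C.ident_comp x.1)).symm
  counit_inner X x := by
    show (⟨x.1, fun f => x.2 (C.comp x.1 f (C.ident (C.cod x.1 f)))⟩ : c.Obj X) = x
    have : (fun f => x.2 (C.comp x.1 f (C.ident (C.cod x.1 f)))) = x.2 := by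
      funext f; rw [C.comp_ident]
    rw [this]
    rfl
  coassoc X x := by
    show (⟨x.1, fun f => (⟨C.cod x.1 f, fun g =>
        ⟨C.cod (C.cod x.1 f) g, fun h => x.2 (C.comp x.1 f (C.comp (C.cod x.1 f) g h))⟩⟩ :
          c.Obj (c.Obj X))⟩ : c.Obj (c.Obj (c.Obj X))) =
      ⟨x.1, fun f => (⟨C.cod x.1 f, fun g =>
        ⟨C.cod x.1 (C.comp x.1 f g), fun h => x.2 (C.comp x.1 (C.comp x.1 f g) h)⟩⟩ :
          c.Obj (c.Obj X))⟩
    congr 1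
    funext f
    congr 1
    funext g
    exact mk_eq_of x.2 (fun h => C.comp x.1 f (C.comp (C.cod x.1 f) g h))
      (C.comp x.1 (C.comp x.1 f g)) (C.cod_comp x.1 f g) (C.assoc x.1 f g)

lemma PolyComonoid.ext' {M1 M2 : PolyComonoid c} (h1 : M1.ε = M2.ε) (h2 : M1.δ = M2.δ) :
    M1 = M2 := by
  cases M1; cases M2; cases h1; cases h2; rfl

def comonoidEquivCat (c : PFunctor.{u, u}) : PolyComonoid c ≃ PolyCatStruct c where
  toFun := PolyComonoid.toCat
  invFun := PolyCatStruct.toComonoid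
  left_inv Mc := by
    apply PolyComonoid.ext'
    · funext X x
      exact (Mc.eps_eq X x).symm
    · funext X x
      exact (Mc.delta_eq' X x).symm
  right_inv C := rfl

end FromCat

section Functors
variable {c : PFunctor.{u, u}} {Mc : PolyComonoid c}

lemma PolyComodHom.ext' {P Q : PolyComod Mc} {f g : PolyComodHom P Q}
    (h : f.h = g.h) : f = g := by cases f; cases g; cases h; rfl

lemma PolyCopresheafHom.ext' {C : PolyCatStruct c} {P Q : PolyCopresheaf C}
    {f g : PolyCopresheafHom P Q} (h : f.h = g.h) : f = g := by
  cases f; cases g; cases h; rfl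

/-- Transport in the subtype family preserves values. -/
lemma val_cast {β : Type u} {pr : β → c.A} {a b : c.A} (h : a = b)
    (x : {m : β // pr m = a}) : (h ▸ x : {m : β // pr m = b}).1 = x.1 := by
  subst h; rfl

namespace PolyComod
variable (P : PolyComod Mc)

lemma key (m : P.M) (f : c.B (P.co m).1) :
    P.co ((P.co m).2 f) =
      ⟨Mc.toCat.cod (P.co m).1 f, fun g => (P.co m).2 (Mc.toCat.comp (P.co m).1 f g)⟩ := by
  have h := P.coassoc m
  rw [Mc.delta_eq' P.M (P.co m)] at h
  have h2 := congrFun (sig_snd_eq h) f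
  dsimp only [Function.comp] at h2
  -- h2 : P.co ((P.co m).2 f) = c.map (P.co m).2 (Mc.D (P.co m).1 f)
  exact h2

lemma counit' (m : P.M) : (P.co m).2 (Mc.ident (P.co m).1) = m := by
  have := P.counit m
  rwa [Mc.eps_eq] at this

end PolyComod

/-- The copresheaf associated to a comodule. -/
def toCopresheaf (P : PolyComod Mc) : PolyCopresheaf Mc.toCat where
  X a := {m : P.M // (P.co m).1 = a}
  act a f x := ⟨(P.co x.1).2 (x.2.symm ▸ f), by
    obtain ⟨m, hm⟩ := x
    subst hm
    exact congrArg Sigma.fst (P.key m f)⟩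
  act_ident a x := by
    obtain ⟨m, hm⟩ := x
    subst hm
    apply Subtype.ext
    rw [val_cast]
    exact P.counit' m
  act_comp a f g x := by
    obtain ⟨m, hm⟩ := x
    subst hm
    apply Subtype.ext
    rw [val_cast]
    exact snd_cast _ _ (P.key m f) _ g

def toCopresheafHom {P Q : PolyComod Mc} (φ : PolyComodHom P Q) :
    PolyCopresheafHom (toCopresheaf P) (toCopresheaf Q) where
  h a x := ⟨φ.h x.1, by
    obtain ⟨m, hm⟩ := x
    subst hm
    exact (congrArg Sigma.fst (φ.compat m)).symm⟩
  compat a f x := by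
    obtain ⟨m, hm⟩ := x
    subst hm
    apply Subtype.ext
    exact (snd_cast (Q.co (φ.h m)) (fun f => φ.h ((P.co m).2 f)) (φ.compat m).symm _ f).symm

def Fcop : PolyComod Mc ⥤ PolyCopresheaf Mc.toCat where
  obj := toCopresheaf
  map φ := toCopresheafHom φ
  map_id P := PolyCopresheafHom.ext' (by funext a x; exact Subtype.ext rfl)
  map_comp φ ψ := PolyCopresheafHom.ext' (by funext a x; exact Subtype.ext rfl)

end Functors

section Gfun
variable {c : PFunctor.{u, u}} {Mc : PolyComonoid c}

lemma sig_ext' {F : c.A → Type u} {a b : c.A} {x : F a} {y : F b} (h : a = b)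
    (h2 : HEq x y) : (⟨a, x⟩ : Σ i, F i) = ⟨b, y⟩ := by
  subst h; rw [eq_of_heq h2]

/-- The comodule associated to a copresheaf. -/
def ofCopresheaf (X : PolyCopresheaf (Mc.toCat)) : PolyComod Mc where
  M := Σ a, X.X a
  co p := ⟨p.1, fun f => ⟨Mc.toCat.cod p.1 f, X.act p.1 f p.2⟩⟩
  counit p := by
    obtain ⟨a, x⟩ := p
    refine (Mc.eps_eq _ _).trans ?_
    exact sig_ext' (Mc.toCat.cod_ident a)
      (heq_cast (Mc.toCat.cod_ident a) _ _ (X.act_ident a x))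
  coassoc p := by
    obtain ⟨a, x⟩ := p
    refine Eq.trans ?_ (Mc.delta_eq' _ _).symm
    show (⟨a, fun f => (⟨Mc.toCat.cod a f, fun g =>
        (⟨Mc.toCat.cod (Mc.toCat.cod a f) g,
          X.act (Mc.toCat.cod a f) g (X.act a f x)⟩ : Σ i, X.X i)⟩ :
        c.Obj (Σ i, X.X i))⟩ : c.Obj (c.Obj (Σ i, X.X i))) =
      ⟨a, fun f => (⟨Mc.toCat.cod a f, fun g =>
        (⟨Mc.toCat.cod a (Mc.toCat.comp a f g),
          X.act a (Mc.toCat.comp a f g) x⟩ : Σ i, X.X i)⟩ : c.Obj (Σ i, X.X i))⟩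
    refine congrArg (Sigma.mk a) (funext fun f => ?_)
    refine congrArg (Sigma.mk (Mc.toCat.cod a f)) (funext fun g => ?_)
    exact sig_ext' (Mc.toCat.cod_comp a f g).symm
      (heq_cast (Mc.toCat.cod_comp a f g) _ _ (X.act_comp a f g x).symm).symm

def ofCopresheafHom {X Y : PolyCopresheaf (Mc.toCat)} (ψ : PolyCopresheafHom X Y) :
    PolyComodHom (ofCopresheaf X) (ofCopresheaf Y) where
  h p := ⟨p.1, ψ.h p.1 p.2⟩
  compat p := by
    obtain ⟨a, x⟩ := p
    show (⟨a, fun f => (⟨Mc.toCat.cod a f,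
        ψ.h (Mc.toCat.cod a f) (X.act a f x)⟩ : Σ i, Y.X i)⟩ : c.Obj (Σ i, Y.X i)) =
      ⟨a, fun f => ⟨Mc.toCat.cod a f, Y.act a f (ψ.h a x)⟩⟩
    exact congrArg (Sigma.mk a) (funext fun f =>
      congrArg (Sigma.mk (Mc.toCat.cod a f)) (ψ.compat a f x))

def Gcop : PolyCopresheaf (Mc.toCat) ⥤ PolyComod Mc where
  obj := ofCopresheaf
  map := ofCopresheafHom
  map_id X := PolyComodHom.ext' (by funext p; rfl)
  map_comp φ ψ := PolyComodHom.ext' (by funext p; rfl)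

end Gfun

section Isos
variable {c : PFunctor.{u, u}} {Mc : PolyComonoid c}

def unitHom (P : PolyComod Mc) : PolyComodHom P (ofCopresheaf (toCopresheaf P)) where
  h m := ⟨(P.co m).1, ⟨m, rfl⟩⟩
  compat m := by
    show (⟨(P.co m).1, fun f =>
        (⟨(P.co ((P.co m).2 f)).1, ⟨(P.co m).2 f, rfl⟩⟩ :
          Σ a, {n : P.M // (P.co n).1 = a})⟩ :
        c.Obj (Σ a, {n : P.M // (P.co n).1 = a})) =
      ⟨(P.co m).1, fun f => ⟨Mc.toCat.cod (P.co m).1 f,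
        (toCopresheaf P).act (P.co m).1 f ⟨m, rfl⟩⟩⟩
    refine congrArg (Sigma.mk (P.co m).1) (funext fun f => ?_)
    exact sig_ext' (congrArg Sigma.fst (P.key m f))
      (subtype_heq (congrArg Sigma.fst (P.key m f)) _ _ rfl)

def unitInv (P : PolyComod Mc) : PolyComodHom (ofCopresheaf (toCopresheaf P)) P where
  h p := p.2.1
  compat p := by
    obtain ⟨a, m, hm⟩ := p
    subst hm
    rfl

def counitHom (X : PolyCopresheaf (Mc.toCat)) :
    PolyCopresheafHom (toCopresheaf (ofCopresheaf X)) X where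
  h a q := q.2 ▸ q.1.2
  compat a f q := by
    obtain ⟨⟨b, x⟩, hb⟩ := q
    subst hb
    rfl

def counitInv (X : PolyCopresheaf (Mc.toCat)) :
    PolyCopresheafHom X (toCopresheaf (ofCopresheaf X)) where
  h a x := ⟨⟨a, x⟩, rfl⟩
  compat a f x := rfl

def comodUnitIso (P : PolyComod Mc) : P ≅ (ofCopresheaf (toCopresheaf P)) where
  hom := unitHom P
  inv := unitInv P
  hom_inv_id := PolyComodHom.ext' (by funext m; rfl)
  inv_hom_id := PolyComodHom.ext' (by
    funext p
    obtain ⟨a, m, hm⟩ := p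
    subst hm
    rfl)

def comodCounitIso (X : PolyCopresheaf (Mc.toCat)) :
    (toCopresheaf (ofCopresheaf X)) ≅ X where
  hom := counitHom X
  inv := counitInv X
  hom_inv_id := PolyCopresheafHom.ext' (by
    funext a q
    obtain ⟨⟨b, x⟩, hb⟩ := q
    subst hb
    rfl)
  inv_hom_id := PolyCopresheafHom.ext' (by funext a x; rfl)

def comodEquivCopresheaf : PolyComod Mc ≌ PolyCopresheaf (Mc.toCat) :=
  CategoryTheory.Equivalence.mk Fcop Gcop
    (NatIso.ofComponents (fun P => comodUnitIso P)
      (fun {P Q} φ => PolyComodHom.ext' (by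
        funext m
        show (⟨(Q.co (φ.h m)).1, ⟨φ.h m, rfl⟩⟩ : Σ a, {n : Q.M // (Q.co n).1 = a}) =
          ⟨(P.co m).1, (toCopresheafHom φ).h (P.co m).1 ⟨m, rfl⟩⟩
        exact sig_ext' (congrArg Sigma.fst (φ.compat m)).symm
          (subtype_heq (congrArg Sigma.fst (φ.compat m)).symm _ _ rfl))))
    (NatIso.ofComponents (fun X => comodCounitIso X)
      (fun {X Y} ψ => PolyCopresheafHom.ext' (by
        funext a q
        obtain ⟨⟨b, x⟩, hb⟩ := q
        subst hb
        rfl)))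

def elemEquiv (P : PolyComod Mc) : (Σ a : c.A, (toCopresheaf P).X a) ≃ P.M where
  toFun p := p.2.1
  invFun m := ⟨(P.co m).1, ⟨m, rfl⟩⟩
  left_inv p := by
    obtain ⟨a, m, hm⟩ := p
    subst hm
    rfl
  right_inv m := rfl

end Isos


/-- The zero polynomial (the comonad `0`). -/
def zP : PFunctor.{u, u} := ⟨PEmpty, fun _ => PEmpty⟩

/-- for a polynomial comonad `c` (with corresponding category
structure), the category of `(c,0)`-bicomodules, i.e. left `c`-comodules with
constant carrier, is equivalent to the category of copresheaves on `c`; the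
carrier of a comodule is identified with the set of elements of the
corresponding copresheaf.  Moreover, the carrier of any `(c,0)`-bicomodule is
necessarily constant: any polynomial `m` with a right `0`-comodule structure
has empty direction-sets. -/
theorem comodules_are_copresheaves :
    (∃ e : ∀ c : PFunctor.{u, u}, PolyComonoid c ≃ PolyCatStruct c,
      ∀ (c : PFunctor.{u, u}) (Mc : PolyComonoid c),
        Nonempty (PolyComod Mc ≌ PolyCopresheaf (e c Mc)) ∧
        ∀ P : PolyComod Mc, ∃ X : PolyCopresheaf (e c Mc),
          Nonempty ((Σ a : c.A, X.X a) ≃ P.M)) ∧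
    (∀ (m : PFunctor.{u, u}) (ρ : ∀ X : Type u, m.Obj X → m.Obj (zP.Obj X)),
      (∀ (X : Type u) (x : m.Obj X),
        m.map (fun z : zP.Obj X => PEmpty.elim z.1) (ρ X x) = x) →
      ∀ i : m.A, IsEmpty (m.B i)) := by
  constructor
  · refine ⟨comonoidEquivCat, fun c Mc => ⟨⟨comodEquivCopresheaf⟩, fun P => ⟨toCopresheaf P, ⟨elemEquiv P⟩⟩⟩⟩
  · intro m ρ hρ i
    constructor
    intro b
    have h := hρ (m.B i) ⟨i, id⟩
    revert h
    obtain ⟨j, k⟩ := ρ (m.B i) ⟨i, id⟩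
    intro h
    have hj : j = i := congrArg Sigma.fst h
    exact (k (hj ▸ b)).1.elim
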